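/- Let W : [0,1]² → [0,1] be a connected graphon, and let (G_n)_{n≥1} be a sequence of weighted graphs where G_n has n vertices and edge weights in [0,1], whose graphon representations converge to W in cut-distance. Let π_n denote the stationary distribution of the random walk on G_n and set α̃_n = n·Σ_{v∈V(G_n)} π_n(v)². Then α̃_n → α_W := (∫_{[0,1]²} W(x,y) dx dy)^{-2} · ∫_0^1 (∫_0^1 W(x,y) dy)² dx as n → ∞. -/

import Mathlib

open MeasureTheory Filter

noncomputable section

/-- `W` is a graphon: a symmetric measurable function `[0,1]² → [0,1]` (extended to `ℝ²`;
only its values on `[0,1]²` are ever used). -/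
def IsGraphon (W : ℝ → ℝ → ℝ) : Prop :=
  Measurable (Function.uncurry W) ∧ (∀ x y, W x y = W y x) ∧
    ∀ x y, W x y ∈ Set.Icc (0 : ℝ) 1

/-- The degree function of a graphon: `deg_W(x) = ∫_0^1 W(x,y) dy`. -/
def gDeg (W : ℝ → ℝ → ℝ) (x : ℝ) : ℝ := ∫ y in Set.Icc (0 : ℝ) 1, W x y

/-- A graphon is connected if `∫_A ∫_{A^c} W > 0` for every measurable `A ⊆ [0,1]` with
`0 < λ(A) < 1`. -/
def GraphonConnected (W : ℝ → ℝ → ℝ) : Prop :=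
  ∀ A : Set ℝ, MeasurableSet A → A ⊆ Set.Icc 0 1 → 0 < volume A → volume A < 1 →
    0 < ∫ x in A, ∫ y in Set.Icc (0 : ℝ) 1 \ A, W x y

/-- The cut-norm `‖U‖_□ = sup_{S,T Borel} |∫_S ∫_T U(x,y) dx dy|` (sets intersected
with `[0,1]`). -/
def cutNorm (U : ℝ → ℝ → ℝ) : ℝ :=
  ⨆ p : {S : Set ℝ // MeasurableSet S} × {T : Set ℝ // MeasurableSet T},
    |∫ x in p.1.1 ∩ Set.Icc (0 : ℝ) 1, ∫ y in p.2.1 ∩ Set.Icc (0 : ℝ) 1, U x y|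

/-- A measure-preserving automorphism of `[0,1]`. -/
def IsMPAuto (φ : ℝ → ℝ) : Prop :=
  MeasurePreserving φ (volume.restrict (Set.Icc (0 : ℝ) 1))
      (volume.restrict (Set.Icc (0 : ℝ) 1)) ∧
    Set.BijOn φ (Set.Icc 0 1) (Set.Icc 0 1)

/-- The cut-distance `δ_□(W₁, W₂) = inf_φ ‖W₁^φ − W₂‖_□` over measure-preserving
automorphisms `φ` of `[0,1]`. -/
def cutDist (W₁ W₂ : ℝ → ℝ → ℝ) : ℝ :=
  ⨅ φ : {φ : ℝ → ℝ // IsMPAuto φ}, cutNorm fun x y => W₁ (φ.1 x) (φ.1 y) - W₂ x y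

/-- The graphon representation `W_G(x,y) = w(v_{⌈nx⌉∨1}, v_{⌈ny⌉∨1})` of a weighted graph
on `n` vertices. -/
def graphonRep (n : ℕ) (w : Fin n → Fin n → ℝ) (x y : ℝ) : ℝ :=
  if h : 0 < n then
    w ⟨min (max (Int.toNat ⌈(n : ℝ) * x⌉) 1 - 1) (n - 1), by omega⟩
      ⟨min (max (Int.toNat ⌈(n : ℝ) * y⌉) 1 - 1) (n - 1), by omega⟩
  else 0

open Finset in
/-- The degree of a vertex of a weighted graph: the sum of the incident edge weights. -/
def wdeg {V : Type*} [Fintype V] (w : V → V → ℝ) (v : V) : ℝ := ∑ u, w v u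

open Finset in
/-- The stationary distribution of the random walk on a weighted graph. -/
def statDist {V : Type*} [Fintype V] (w : V → V → ℝ) (v : V) : ℝ :=
  wdeg w v / ∑ u, wdeg w u

/-- A weighted graph: symmetric weights in `[0,1]`, no loops. -/
def IsWeightedGraph {V : Type*} (w : V → V → ℝ) : Prop :=
  (∀ x y, w x y = w y x) ∧ (∀ x y, w x y ∈ Set.Icc (0 : ℝ) 1) ∧ (∀ x, w x x = 0)

namespace AlphaAux

open Set

lemma vol_Icc01 : volume (Icc (0:ℝ) 1) = 1 := by simp [Real.volume_Icc]

lemma vol_lt_top {s : Set ℝ} (hs : s ⊆ Icc 0 1) : volume s < ⊤ :=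
  lt_of_le_of_lt (measure_mono hs) (by rw [vol_Icc01]; exact ENNReal.one_lt_top)

lemma vol_toReal_le {s : Set ℝ} (hs : s ⊆ Icc 0 1) : (volume s).toReal ≤ 1 := by
  rw [← ENNReal.toReal_one]
  exact ENNReal.toReal_mono (by simp) (le_trans (measure_mono hs) vol_Icc01.le)

lemma integrableOn_of_bdd {f : ℝ → ℝ} (hm : Measurable f) {C : ℝ} (hC : ∀ x, |f x| ≤ C)
    {s : Set ℝ} (hs : s ⊆ Icc 0 1) : IntegrableOn f s := by
  have h : IntegrableOn (fun _ : ℝ => C) s volume := integrableOn_const (vol_lt_top hs).ne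
  exact h.mono' hm.aestronglyMeasurable
    (Filter.Eventually.of_forall fun x => by simpa [Real.norm_eq_abs] using hC x)

lemma gDeg_abs_le {W : ℝ → ℝ → ℝ} (hb : ∀ x y, W x y ∈ Icc (0:ℝ) 1) (x : ℝ) :
    |gDeg W x| ≤ 1 := by
  have h := norm_setIntegral_le_of_norm_le_const (μ := volume) (s := Icc (0:ℝ) 1)
    (f := W x) (C := 1) (vol_lt_top subset_rfl)
    (fun y _ => by rw [Real.norm_eq_abs, abs_le]; exact ⟨by linarith [(hb x y).1], (hb x y).2⟩)
  rw [Real.norm_eq_abs] at h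
  calc |gDeg W x| ≤ 1 * (volume (Icc (0:ℝ) 1)).toReal := h
    _ ≤ 1 := by rw [one_mul]; exact vol_toReal_le subset_rfl

lemma cutNorm_term_le {U : ℝ → ℝ → ℝ} (hU : ∀ x y, |U x y| ≤ 1) {S T : Set ℝ}
    (hS : MeasurableSet S) (hT : MeasurableSet T) :
    |∫ x in S ∩ Icc (0:ℝ) 1, ∫ y in T ∩ Icc (0:ℝ) 1, U x y| ≤ 1 := by
  have hinner : ∀ x : ℝ, ‖∫ y in T ∩ Icc (0:ℝ) 1, U x y‖ ≤ 1 := by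
    intro x
    have h := norm_setIntegral_le_of_norm_le_const (μ := volume) (s := T ∩ Icc (0:ℝ) 1)
      (f := U x) (C := 1) (vol_lt_top inter_subset_right)
      (fun y _ => by rw [Real.norm_eq_abs]; exact hU x y)
    calc ‖∫ y in T ∩ Icc (0:ℝ) 1, U x y‖ ≤ 1 * (volume (T ∩ Icc (0:ℝ) 1)).toReal := h
      _ ≤ 1 := by rw [one_mul]; exact vol_toReal_le inter_subset_right
  have h := norm_setIntegral_le_of_norm_le_const (μ := volume) (s := S ∩ Icc (0:ℝ) 1)
    (f := fun x => ∫ y in T ∩ Icc (0:ℝ) 1, U x y) (C := 1) (vol_lt_top inter_subset_right)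
    (fun x _ => hinner x)
  rw [Real.norm_eq_abs] at h
  calc |∫ x in S ∩ Icc (0:ℝ) 1, ∫ y in T ∩ Icc (0:ℝ) 1, U x y|
      ≤ 1 * (volume (S ∩ Icc (0:ℝ) 1)).toReal := h
    _ ≤ 1 := by rw [one_mul]; exact vol_toReal_le inter_subset_right

lemma le_cutNorm {U : ℝ → ℝ → ℝ} (hU : ∀ x y, |U x y| ≤ 1) {S T : Set ℝ}
    (hS : MeasurableSet S) (hT : MeasurableSet T) :
    |∫ x in S ∩ Icc (0:ℝ) 1, ∫ y in T ∩ Icc (0:ℝ) 1, U x y| ≤ cutNorm U := by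
  have hbdd : BddAbove (Set.range fun p : {S : Set ℝ // MeasurableSet S} × {T : Set ℝ // MeasurableSet T} =>
      |∫ x in p.1.1 ∩ Set.Icc (0 : ℝ) 1, ∫ y in p.2.1 ∩ Set.Icc (0 : ℝ) 1, U x y|) := by
    refine ⟨1, ?_⟩
    rintro _ ⟨p, rfl⟩
    exact cutNorm_term_le hU p.1.2 p.2.2
  exact le_ciSup hbdd (⟨⟨S, hS⟩, ⟨T, hT⟩⟩ :
    {S : Set ℝ // MeasurableSet S} × {T : Set ℝ // MeasurableSet T})

lemma mp_integral {φ : ℝ → ℝ} (hφ : IsMPAuto φ) {g : ℝ → ℝ} (hg : Measurable g) :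
    ∫ x in Icc (0:ℝ) 1, g (φ x) = ∫ x in Icc (0:ℝ) 1, g x := by
  have h1 := hφ.1
  have : (∫ x in Icc (0:ℝ) 1, g x)
      = ∫ x, g x ∂(Measure.map φ (volume.restrict (Icc 0 1))) := by rw [h1.map_eq]
  rw [this, integral_map h1.measurable.aemeasurable
    (by rw [h1.map_eq]; exact hg.aestronglyMeasurable)]

lemma gDeg_measurable {W : ℝ → ℝ → ℝ} (hm : Measurable (Function.uncurry W)) :
    Measurable (gDeg W) :=
  (hm.stronglyMeasurable.integral_prod_right (ν := volume.restrict (Icc 0 1))).measurable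


variable {W₁ W₂ : ℝ → ℝ → ℝ}

lemma deg_sub_eq (h₁m : Measurable (Function.uncurry W₁)) (h₂m : Measurable (Function.uncurry W₂))
    (h₁b : ∀ x y, W₁ x y ∈ Icc (0:ℝ) 1) (h₂b : ∀ x y, W₂ x y ∈ Icc (0:ℝ) 1)
    {φ : ℝ → ℝ} (hφ : IsMPAuto φ) (x : ℝ) :
    ∫ y in Icc (0:ℝ) 1, (W₁ (φ x) (φ y) - W₂ x y) = gDeg W₁ (φ x) - gDeg W₂ x := by
  have hsec1 : Measurable (W₁ (φ x)) := h₁m.of_uncurry_left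
  have habs : ∀ (V : ℝ → ℝ → ℝ), (∀ a b, V a b ∈ Icc (0:ℝ) 1) → ∀ a b, |V a b| ≤ 1 := by
    intro V hV a b
    rw [abs_le]; exact ⟨by linarith [(hV a b).1], (hV a b).2⟩
  have i1 : IntegrableOn (fun y => W₁ (φ x) (φ y)) (Icc (0:ℝ) 1) :=
    integrableOn_of_bdd (hsec1.comp hφ.1.measurable) (fun y => habs W₁ h₁b _ _) subset_rfl
  have i2 : IntegrableOn (fun y => W₂ x y) (Icc (0:ℝ) 1) :=
    integrableOn_of_bdd h₂m.of_uncurry_left (fun y => habs W₂ h₂b _ _) subset_rfl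
  rw [integral_sub i1 i2]
  congr 1
  exact mp_integral hφ hsec1

lemma l1_le (h₁m : Measurable (Function.uncurry W₁)) (h₂m : Measurable (Function.uncurry W₂))
    (h₁b : ∀ x y, W₁ x y ∈ Icc (0:ℝ) 1) (h₂b : ∀ x y, W₂ x y ∈ Icc (0:ℝ) 1)
    {φ : ℝ → ℝ} (hφ : IsMPAuto φ) :
    ∫ x in Icc (0:ℝ) 1, |gDeg W₁ (φ x) - gDeg W₂ x|
      ≤ 2 * cutNorm (fun x y => W₁ (φ x) (φ y) - W₂ x y) := by
  set U : ℝ → ℝ → ℝ := fun x y => W₁ (φ x) (φ y) - W₂ x y with hU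
  set f : ℝ → ℝ := fun x => gDeg W₁ (φ x) with hf
  set g : ℝ → ℝ := gDeg W₂ with hg
  have hfm : Measurable f := (gDeg_measurable h₁m).comp hφ.1.measurable
  have hgm : Measurable g := gDeg_measurable h₂m
  have hfb : ∀ x, |f x| ≤ 1 := fun x => gDeg_abs_le h₁b (φ x)
  have hgb : ∀ x, |g x| ≤ 1 := fun x => gDeg_abs_le h₂b x
  have hUb : ∀ x y, |U x y| ≤ 1 := by
    intro x y
    have h1 := h₁b (φ x) (φ y); have h2 := h₂b x y
    rw [abs_le]
    constructor
    · simp only [hU]; linarith [h1.1, h2.2]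
    · simp only [hU]; linarith [h1.2, h2.1]
  set S : Set ℝ := {x | g x ≤ f x} with hS
  have hSm : MeasurableSet S := measurableSet_le hgm hfm
  have hint : Integrable (fun x => |f x - g x|) (volume.restrict (Icc (0:ℝ) 1)) :=
    integrableOn_of_bdd (hfm.sub hgm).abs
      (fun x => by rw [abs_abs]; calc |f x - g x| ≤ |f x| + |g x| := abs_sub _ _
                   _ ≤ 2 := by linarith [hfb x, hgb x]) subset_rfl
  have hsplit : ∫ x in Icc (0:ℝ) 1, |f x - g x|
      = (∫ x in S, |f x - g x| ∂(volume.restrict (Icc (0:ℝ) 1)))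
        + ∫ x in Sᶜ, |f x - g x| ∂(volume.restrict (Icc (0:ℝ) 1)) :=
    (integral_add_compl hSm hint).symm
  have e1 : ∫ x in S, |f x - g x| ∂(volume.restrict (Icc (0:ℝ) 1))
      = ∫ x in S ∩ Icc (0:ℝ) 1, ∫ y in Icc (0:ℝ) 1, U x y := by
    rw [Measure.restrict_restrict hSm]
    refine setIntegral_congr_fun (hSm.inter measurableSet_Icc) (fun x hx => ?_)
    rw [abs_of_nonneg (sub_nonneg.2 hx.1)]
    exact (deg_sub_eq h₁m h₂m h₁b h₂b hφ x).symm
  have e2 : ∫ x in Sᶜ, |f x - g x| ∂(volume.restrict (Icc (0:ℝ) 1))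
      = - ∫ x in Sᶜ ∩ Icc (0:ℝ) 1, ∫ y in Icc (0:ℝ) 1, U x y := by
    rw [Measure.restrict_restrict hSm.compl, ← integral_neg]
    refine setIntegral_congr_fun (hSm.compl.inter measurableSet_Icc) (fun x hx => ?_)
    have hx1 : f x < g x := not_le.1 hx.1
    rw [abs_of_neg (by linarith : f x - g x < 0)]
    rw [deg_sub_eq h₁m h₂m h₁b h₂b hφ x]
  have b1 : ∫ x in S ∩ Icc (0:ℝ) 1, ∫ y in Icc (0:ℝ) 1, U x y ≤ cutNorm U := by
    have h := le_cutNorm hUb hSm MeasurableSet.univ (T := univ)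
    rw [univ_inter] at h
    exact le_trans (le_abs_self _) h
  have b2 : - ∫ x in Sᶜ ∩ Icc (0:ℝ) 1, ∫ y in Icc (0:ℝ) 1, U x y ≤ cutNorm U := by
    have h := le_cutNorm hUb hSm.compl MeasurableSet.univ (T := univ)
    rw [univ_inter] at h
    exact le_trans (neg_le_abs _) h
  rw [hsplit, e1, e2]
  linarith

lemma intD_close (h₁m : Measurable (Function.uncurry W₁)) (h₂m : Measurable (Function.uncurry W₂))
    (h₁b : ∀ x y, W₁ x y ∈ Icc (0:ℝ) 1) (h₂b : ∀ x y, W₂ x y ∈ Icc (0:ℝ) 1)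
    {φ : ℝ → ℝ} (hφ : IsMPAuto φ) :
    |(∫ x in Icc (0:ℝ) 1, gDeg W₁ x) - ∫ x in Icc (0:ℝ) 1, gDeg W₂ x|
      ≤ cutNorm (fun x y => W₁ (φ x) (φ y) - W₂ x y) := by
  set U : ℝ → ℝ → ℝ := fun x y => W₁ (φ x) (φ y) - W₂ x y with hU
  have hUb : ∀ x y, |U x y| ≤ 1 := by
    intro x y
    have h1 := h₁b (φ x) (φ y); have h2 := h₂b x y
    rw [abs_le]
    exact ⟨by simp only [hU]; linarith [h1.1, h2.2], by simp only [hU]; linarith [h1.2, h2.1]⟩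
  have hfm : Measurable (fun x => gDeg W₁ (φ x)) := (gDeg_measurable h₁m).comp hφ.1.measurable
  have i1 : IntegrableOn (fun x => gDeg W₁ (φ x)) (Icc (0:ℝ) 1) :=
    integrableOn_of_bdd hfm (fun x => gDeg_abs_le h₁b (φ x)) subset_rfl
  have i2 : IntegrableOn (gDeg W₂) (Icc (0:ℝ) 1) :=
    integrableOn_of_bdd (gDeg_measurable h₂m) (fun x => gDeg_abs_le h₂b x) subset_rfl
  rw [← mp_integral hφ (gDeg_measurable h₁m), ← integral_sub i1 i2]
  rw [setIntegral_congr_fun measurableSet_Icc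
    (fun x _ => (deg_sub_eq h₁m h₂m h₁b h₂b hφ x).symm)]
  have h := le_cutNorm hUb MeasurableSet.univ MeasurableSet.univ
  rw [univ_inter] at h
  exact h

lemma intSq_close (h₁m : Measurable (Function.uncurry W₁)) (h₂m : Measurable (Function.uncurry W₂))
    (h₁b : ∀ x y, W₁ x y ∈ Icc (0:ℝ) 1) (h₂b : ∀ x y, W₂ x y ∈ Icc (0:ℝ) 1)
    {φ : ℝ → ℝ} (hφ : IsMPAuto φ) :
    |(∫ x in Icc (0:ℝ) 1, gDeg W₁ x ^ 2) - ∫ x in Icc (0:ℝ) 1, gDeg W₂ x ^ 2|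
      ≤ 4 * cutNorm (fun x y => W₁ (φ x) (φ y) - W₂ x y) := by
  set f : ℝ → ℝ := fun x => gDeg W₁ (φ x) with hf
  set g : ℝ → ℝ := gDeg W₂ with hg
  have hfm : Measurable f := (gDeg_measurable h₁m).comp hφ.1.measurable
  have hgm : Measurable g := gDeg_measurable h₂m
  have hfb : ∀ x, |f x| ≤ 1 := fun x => gDeg_abs_le h₁b (φ x)
  have hgb : ∀ x, |g x| ≤ 1 := fun x => gDeg_abs_le h₂b x
  have h1 : (∫ x in Icc (0:ℝ) 1, gDeg W₁ x ^ 2) = ∫ x in Icc (0:ℝ) 1, f x ^ 2 :=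
    (mp_integral hφ ((gDeg_measurable h₁m).pow_const 2)).symm
  have i1 : IntegrableOn (fun x => f x ^ 2) (Icc (0:ℝ) 1) :=
    integrableOn_of_bdd (hfm.pow_const 2)
      (fun x => by rw [abs_pow]; exact pow_le_one₀ (abs_nonneg _) (hfb x)) subset_rfl
  have i2 : IntegrableOn (fun x => g x ^ 2) (Icc (0:ℝ) 1) :=
    integrableOn_of_bdd (hgm.pow_const 2)
      (fun x => by rw [abs_pow]; exact pow_le_one₀ (abs_nonneg _) (hgb x)) subset_rfl
  have idiff : Integrable (fun x => |f x - g x|) (volume.restrict (Icc (0:ℝ) 1)) :=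
    integrableOn_of_bdd (hfm.sub hgm).abs
      (fun x => by rw [abs_abs]; calc |f x - g x| ≤ |f x| + |g x| := abs_sub _ _
                   _ ≤ 2 := by linarith [hfb x, hgb x]) subset_rfl
  rw [h1, ← integral_sub i1 i2]
  calc |∫ x in Icc (0:ℝ) 1, (f x ^ 2 - g x ^ 2)|
      ≤ ∫ x in Icc (0:ℝ) 1, |f x ^ 2 - g x ^ 2| := by
        simpa [Real.norm_eq_abs] using
          norm_integral_le_integral_norm (μ := volume.restrict (Icc (0:ℝ) 1))
            (fun x => f x ^ 2 - g x ^ 2)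
    _ ≤ ∫ x in Icc (0:ℝ) 1, 2 * |f x - g x| := by
        refine setIntegral_mono_on ((i1.sub i2).abs) (idiff.const_mul 2) measurableSet_Icc
          (fun x _ => ?_)
        have : f x ^ 2 - g x ^ 2 = (f x - g x) * (f x + g x) := by ring
        rw [this, abs_mul, mul_comm]
        refine mul_le_mul (by calc |f x + g x| ≤ |f x| + |g x| := abs_add_le _ _
            _ ≤ 2 := by linarith [hfb x, hgb x]) le_rfl (abs_nonneg _) (by norm_num)
    _ = 2 * ∫ x in Icc (0:ℝ) 1, |f x - g x| := by
        rw [← integral_const_mul]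
    _ ≤ 2 * (2 * cutNorm (fun x y => W₁ (φ x) (φ y) - W₂ x y)) := by
        have := l1_le h₁m h₂m h₁b h₂b hφ
        linarith
    _ = 4 * cutNorm (fun x y => W₁ (φ x) (φ y) - W₂ x y) := by ring


lemma intW_pos {W : ℝ → ℝ → ℝ} (hW : IsGraphon W) (hconn : GraphonConnected W) :
    0 < ∫ x in Icc (0:ℝ) 1, gDeg W x := by
  obtain ⟨hm, _, hb⟩ := hW
  set A : Set ℝ := Icc 0 2⁻¹ with hA
  have hAsub : A ⊆ Icc (0:ℝ) 1 := Icc_subset_Icc le_rfl (by norm_num)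
  have hApos : 0 < volume A := by
    rw [hA, Real.volume_Icc]
    simp only [ENNReal.ofReal_pos]; norm_num
  have hAlt : volume A < 1 := by
    rw [hA, Real.volume_Icc, ← ENNReal.ofReal_one]
    exact ENNReal.ofReal_lt_ofReal_iff (by norm_num) |>.2 (by norm_num)
  have h0 := hconn A measurableSet_Icc hAsub hApos hAlt
  have habs : ∀ a b, |W a b| ≤ 1 := fun a b => by
    rw [abs_le]; exact ⟨by linarith [(hb a b).1], (hb a b).2⟩
  have hdegabs := gDeg_abs_le hb
  have hdegnn : ∀ x, 0 ≤ gDeg W x := fun x =>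
    setIntegral_nonneg measurableSet_Icc (fun y _ => (hb x y).1)
  have iInner : IntegrableOn (fun x => ∫ y in Icc (0:ℝ) 1 \ A, W x y) A := by
    refine integrableOn_of_bdd ?_ (C := 1) ?_ hAsub
    · exact (hm.stronglyMeasurable.integral_prod_right
        (ν := volume.restrict (Icc (0:ℝ) 1 \ A))).measurable
    · intro x
      have h := norm_setIntegral_le_of_norm_le_const (μ := volume) (s := Icc (0:ℝ) 1 \ A)
        (f := W x) (C := 1) (vol_lt_top diff_subset)
        (fun y _ => by rw [Real.norm_eq_abs]; exact habs x y)
      rw [Real.norm_eq_abs] at h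
      exact le_trans h (by rw [one_mul]; exact vol_toReal_le diff_subset)
  have iDeg : IntegrableOn (gDeg W) (Icc (0:ℝ) 1) :=
    integrableOn_of_bdd (gDeg_measurable hm) hdegabs subset_rfl
  have step1 : ∫ x in A, ∫ y in Icc (0:ℝ) 1 \ A, W x y ≤ ∫ x in A, gDeg W x := by
    refine setIntegral_mono_on iInner (iDeg.mono_set hAsub) measurableSet_Icc (fun x _ => ?_)
    refine setIntegral_mono_set
      (integrableOn_of_bdd hm.of_uncurry_left (habs x) subset_rfl)
      (Filter.Eventually.of_forall fun y => (hb x y).1)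
      (HasSubset.Subset.eventuallyLE diff_subset)
  have step2 : ∫ x in A, gDeg W x ≤ ∫ x in Icc (0:ℝ) 1, gDeg W x :=
    setIntegral_mono_set iDeg (Filter.Eventually.of_forall fun x => hdegnn x)
      (HasSubset.Subset.eventuallyLE hAsub)
  linarith

lemma step_integral {n : ℕ} (hn : 0 < n) (F : Fin n → ℝ) :
    ∫ x in Icc (0:ℝ) 1, F ⟨min (max (Int.toNat ⌈(n : ℝ) * x⌉) 1 - 1) (n - 1), by omega⟩
      = (∑ v, F v) / n := by
  have hnR : (0:ℝ) < n := by exact_mod_cast hn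
  set G : ℕ → ℝ := fun k => F ⟨min k (n-1), by omega⟩ with hG
  set f : ℝ → ℝ :=
    fun x => F ⟨min (max (Int.toNat ⌈(n : ℝ) * x⌉) 1 - 1) (n - 1), by omega⟩ with hfdef
  have hfm : Measurable f := by
    have h : f = (fun z : ℤ => F ⟨min (max z.toNat 1 - 1) (n-1), by omega⟩)
        ∘ (fun x : ℝ => ⌈(n:ℝ) * x⌉) := rfl
    rw [h]
    exact Measurable.of_discrete.comp (Int.measurable_ceil.comp (measurable_id.const_mul _))
  set C : ℝ := ∑ u, |F u| with hC
  have hfb : ∀ x, |f x| ≤ C :=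
    fun x => Finset.single_le_sum (fun i _ => abs_nonneg (F i)) (Finset.mem_univ _)
  set a : ℕ → ℝ := fun k => k / n with ha
  have hasucc : ∀ k : ℕ, a k ≤ a (k+1) := fun k => by
    rw [ha]
    exact (div_le_div_iff_of_pos_right hnR).2 (by push_cast; linarith)
  have hint : ∀ k, k < n → IntervalIntegrable f volume (a k) (a (k+1)) := by
    intro k hk
    apply IntegrableOn.intervalIntegrable
    apply integrableOn_of_bdd hfm hfb
    rw [uIcc_of_le (hasucc k)]
    apply Icc_subset_Icc
    · rw [ha]; positivity
    · rw [ha, div_le_one hnR]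
      exact_mod_cast Nat.succ_le_of_lt hk
  have hterm : ∀ k ∈ Finset.range n, ∫ x in a k..a (k+1), f x = G k / n := by
    intro k hkmem
    have hk : k < n := Finset.mem_range.1 hkmem
    rw [intervalIntegral.integral_of_le (hasucc k)]
    rw [setIntegral_congr_fun measurableSet_Ioc (g := fun _ : ℝ => G k) ?_]
    · rw [setIntegral_const, measureReal_def, Real.volume_Ioc]
      have hlen : a (k+1) - a k = 1/n := by
        rw [ha]; push_cast; field_simp; ring
      rw [hlen, ENNReal.toReal_ofReal (by positivity), smul_eq_mul]
      ring
    · intro x hx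
      have hx1 : (k:ℝ) < x * n := by
        have h := hx.1
        rw [ha, div_lt_iff₀ hnR] at h
        exact h
      have hx2 : x * n ≤ (k:ℝ) + 1 := by
        have h := hx.2
        rw [ha, le_div_iff₀ hnR] at h
        push_cast at h
        exact h
      have hceil : ⌈(n:ℝ) * x⌉ = (k:ℤ) + 1 := by
        rw [Int.ceil_eq_iff]
        have hcomm : (n:ℝ) * x = x * n := mul_comm _ _
        constructor
        · push_cast; linarith
        · push_cast; linarith
      show F _ = G k
      rw [hG]
      congr 1
      apply Fin.ext
      simp only [hceil]
      have h1 : ((k:ℤ) + 1).toNat = k + 1 := by omega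
      rw [h1]
      omega
  have hsum := intervalIntegral.sum_integral_adjacent_intervals (a := a) (μ := volume)
    (fun k hk => hint k hk)
  have ha0 : a 0 = 0 := by rw [ha]; simp
  have han : a n = 1 := by rw [ha]; field_simp
  have key : ∫ x in Icc (0:ℝ) 1, f x = ∑ k ∈ Finset.range n, (G k / n) := by
    rw [integral_Icc_eq_integral_Ioc, ← intervalIntegral.integral_of_le zero_le_one]
    rw [← ha0, ← han, ← hsum]
    exact Finset.sum_congr rfl hterm
  rw [key, ← Finset.sum_div]
  congr 1
  rw [← Fin.sum_univ_eq_sum_range G n]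
  apply Finset.sum_congr rfl
  intro v _
  show F ⟨(v : ℕ) ⊓ (n - 1), by omega⟩ = F v
  congr 1
  apply Fin.ext
  show (v : ℕ) ⊓ (n - 1) = (v : ℕ)
  have hv := v.isLt
  omega


lemma graphonRep_apply {n : ℕ} (hn : 0 < n) (w : Fin n → Fin n → ℝ) (x y : ℝ) :
    graphonRep n w x y
      = w ⟨min (max (Int.toNat ⌈(n : ℝ) * x⌉) 1 - 1) (n - 1), by omega⟩
          ⟨min (max (Int.toNat ⌈(n : ℝ) * y⌉) 1 - 1) (n - 1), by omega⟩ := dif_pos hn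

lemma graphonRep_measurable (n : ℕ) (w : Fin n → Fin n → ℝ) :
    Measurable (Function.uncurry (graphonRep n w)) := by
  rcases Nat.eq_zero_or_pos n with h | h
  · subst h
    have : Function.uncurry (graphonRep 0 w) = fun _ : ℝ × ℝ => (0:ℝ) := by
      funext p
      simp [Function.uncurry, graphonRep]
    rw [this]
    exact measurable_const
  · have heq : Function.uncurry (graphonRep n w)
        = (fun q : ℤ × ℤ => w ⟨min (max q.1.toNat 1 - 1) (n-1), by omega⟩
            ⟨min (max q.2.toNat 1 - 1) (n-1), by omega⟩)
          ∘ (fun p : ℝ × ℝ => (⌈(n:ℝ) * p.1⌉, ⌈(n:ℝ) * p.2⌉)) := by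
      funext p
      simp only [Function.uncurry, Function.comp]
      exact graphonRep_apply h w p.1 p.2
    rw [heq]
    exact Measurable.of_discrete.comp
      ((Int.measurable_ceil.comp (measurable_fst.const_mul _)).prodMk
        (Int.measurable_ceil.comp (measurable_snd.const_mul _)))

lemma gDeg_graphonRep {n : ℕ} (hn : 0 < n) (w : Fin n → Fin n → ℝ) (x : ℝ) :
    gDeg (graphonRep n w) x
      = wdeg w ⟨min (max (Int.toNat ⌈(n : ℝ) * x⌉) 1 - 1) (n - 1), by omega⟩ / n := by
  unfold gDeg
  rw [setIntegral_congr_fun measurableSet_Icc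
    (g := fun y => w ⟨min (max (Int.toNat ⌈(n : ℝ) * x⌉) 1 - 1) (n - 1), by omega⟩
      ⟨min (max (Int.toNat ⌈(n : ℝ) * y⌉) 1 - 1) (n - 1), by omega⟩)
    (fun y _ => graphonRep_apply hn w x y)]
  exact step_integral hn _

lemma intD_graphonRep {n : ℕ} (hn : 0 < n) (w : Fin n → Fin n → ℝ) :
    ∫ x in Icc (0:ℝ) 1, gDeg (graphonRep n w) x = (∑ v, wdeg w v / n) / n := by
  rw [setIntegral_congr_fun measurableSet_Icc
    (g := fun x => wdeg w ⟨min (max (Int.toNat ⌈(n : ℝ) * x⌉) 1 - 1) (n - 1), by omega⟩ / n)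
    (fun x _ => gDeg_graphonRep hn w x)]
  exact step_integral hn (fun v => wdeg w v / n)

lemma intSq_graphonRep {n : ℕ} (hn : 0 < n) (w : Fin n → Fin n → ℝ) :
    ∫ x in Icc (0:ℝ) 1, gDeg (graphonRep n w) x ^ 2 = (∑ v, (wdeg w v / n) ^ 2) / n := by
  rw [setIntegral_congr_fun measurableSet_Icc
    (g := fun x => (wdeg w ⟨min (max (Int.toNat ⌈(n : ℝ) * x⌉) 1 - 1) (n - 1), by omega⟩ / n) ^ 2)
    (fun x _ => by rw [gDeg_graphonRep hn w x])]
  exact step_integral hn (fun v => (wdeg w v / n) ^ 2)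

lemma alg {n : ℕ} (hn : 0 < n) (d : Fin n → ℝ) :
    ((∑ v, d v / (n:ℝ)) / n)⁻¹ ^ 2 * ((∑ v, (d v / (n:ℝ)) ^ 2) / n)
      = (n:ℝ) * ∑ v, (d v / ∑ u, d u) ^ 2 := by
  have hnR : ((n:ℝ)) ≠ 0 := by positivity
  set S : ℝ := ∑ u, d u with hS
  set T : ℝ := ∑ v, d v ^ 2 with hT
  have h1 : ∑ v, (d v / S) ^ 2 = T / S ^ 2 := by
    simp only [div_pow, hT]
    rw [Finset.sum_div]
  have h2 : ∑ v, d v / (n:ℝ) = S / n := by rw [hS, Finset.sum_div]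
  have h3 : ∑ v, (d v / (n:ℝ)) ^ 2 = T / (n:ℝ) ^ 2 := by
    simp only [div_pow, hT]
    rw [Finset.sum_div]
  rw [h1, h2, h3]
  rcases eq_or_ne S 0 with hS0 | hS0
  · simp [hS0]
  · field_simp


end AlphaAux

open Finset in
/-- If `W` is a connected graphon and the graphon representations of the
weighted graphs `G_n` converge to `W` in cut-distance, then
`α̃_n = n·Σ_v π_n(v)² → α_W = (∫∫W)⁻²·∫ deg_W²`. -/
theorem alphaTilde_tendsto_alphaW (W : ℝ → ℝ → ℝ) (hW : IsGraphon W)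
    (hconn : GraphonConnected W)
    (w : (n : ℕ) → Fin n → Fin n → ℝ)
    (hWG : ∀ n : ℕ, 1 ≤ n → IsWeightedGraph (w n))
    (hconv : Tendsto (fun n => cutDist (graphonRep n (w n)) W) atTop (nhds 0)) :
    Tendsto (fun n : ℕ => (n : ℝ) * ∑ v, statDist (w n) v ^ 2) atTop
      (nhds ((∫ x in Set.Icc (0 : ℝ) 1, ∫ y in Set.Icc (0 : ℝ) 1, W x y)⁻¹ ^ 2 *
        ∫ x in Set.Icc (0 : ℝ) 1, gDeg W x ^ 2)) := by
  obtain ⟨hWm, hWsym, hWb⟩ := hW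
  have hWb' : ∀ x y, W x y ∈ Set.Icc (0:ℝ) 1 := hWb
  set D : ℝ := ∫ x in Set.Icc (0:ℝ) 1, gDeg W x with hDdef
  set b : ℝ := ∫ x in Set.Icc (0:ℝ) 1, gDeg W x ^ 2 with hbdef
  have hDpos : 0 < D := AlphaAux.intW_pos ⟨hWm, hWsym, hWb⟩ hconn
  haveI : Nonempty {φ : ℝ → ℝ // IsMPAuto φ} :=
    ⟨⟨id, ⟨MeasurePreserving.id _, Set.bijOn_id _⟩⟩⟩
  have key : ∀ ε > (0:ℝ), ∀ᶠ n : ℕ in atTop,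
      |(∫ x in Set.Icc (0:ℝ) 1, gDeg (graphonRep n (w n)) x) - D| < ε ∧
      |(∫ x in Set.Icc (0:ℝ) 1, gDeg (graphonRep n (w n)) x ^ 2) - b| < ε := by
    intro ε hε
    have h8 : (0:ℝ) < ε / 8 := by linarith
    filter_upwards [hconv.eventually_lt_const h8, eventually_ge_atTop 1] with n hn h1n
    rw [cutDist] at hn
    obtain ⟨⟨φ, hφ⟩, hlt⟩ := exists_lt_of_ciInf_lt hn
    have h₁m := AlphaAux.graphonRep_measurable n (w n)
    have h₁b : ∀ x y, graphonRep n (w n) x y ∈ Set.Icc (0:ℝ) 1 := fun x y => by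
      rw [AlphaAux.graphonRep_apply h1n]
      exact (hWG n h1n).2.1 _ _
    have c1 := AlphaAux.intD_close h₁m hWm h₁b hWb' hφ
    have c2 := AlphaAux.intSq_close h₁m hWm h₁b hWb' hφ
    constructor
    · calc |(∫ x in Set.Icc (0:ℝ) 1, gDeg (graphonRep n (w n)) x) - D|
          ≤ cutNorm (fun x y => graphonRep n (w n) (φ x) (φ y) - W x y) := c1
        _ < ε := by linarith
    · calc |(∫ x in Set.Icc (0:ℝ) 1, gDeg (graphonRep n (w n)) x ^ 2) - b|
          ≤ 4 * cutNorm (fun x y => graphonRep n (w n) (φ x) (φ y) - W x y) := c2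
        _ < ε := by linarith
  have conv1 : Tendsto (fun n : ℕ => ∫ x in Set.Icc (0:ℝ) 1, gDeg (graphonRep n (w n)) x)
      atTop (nhds D) := by
    rw [Metric.tendsto_nhds]
    intro ε hε
    filter_upwards [key ε hε] with n h
    rw [Real.dist_eq]
    exact h.1
  have conv2 : Tendsto (fun n : ℕ => ∫ x in Set.Icc (0:ℝ) 1, gDeg (graphonRep n (w n)) x ^ 2)
      atTop (nhds b) := by
    rw [Metric.tendsto_nhds]
    intro ε hε
    filter_upwards [key ε hε] with n h
    rw [Real.dist_eq]
    exact h.2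
  have hmain : Tendsto (fun n : ℕ =>
      (∫ x in Set.Icc (0:ℝ) 1, gDeg (graphonRep n (w n)) x)⁻¹ ^ 2 *
        (∫ x in Set.Icc (0:ℝ) 1, gDeg (graphonRep n (w n)) x ^ 2)) atTop
      (nhds (D⁻¹ ^ 2 * b)) :=
    (Tendsto.pow (conv1.inv₀ hDpos.ne') 2).mul conv2
  have heq : (fun n : ℕ =>
      (∫ x in Set.Icc (0:ℝ) 1, gDeg (graphonRep n (w n)) x)⁻¹ ^ 2 *
        (∫ x in Set.Icc (0:ℝ) 1, gDeg (graphonRep n (w n)) x ^ 2))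
      =ᶠ[atTop] (fun n : ℕ => (n : ℝ) * ∑ v, statDist (w n) v ^ 2) := by
    filter_upwards [eventually_ge_atTop 1] with n hn
    rw [AlphaAux.intD_graphonRep hn, AlphaAux.intSq_graphonRep hn]
    simp only [statDist]
    exact AlphaAux.alg hn (wdeg (w n))
  exact hmain.congr' heq


end
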